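/- Let K be an imaginary quadratic number field with discriminant D. Then the class number of K satisfies h_K < (1/π) · √|D| · (2 + log |D|). -/

import Mathlib

open NumberField Module UniqueFactorizationMonoid Finset Ideal
open scoped Classical

section Counting

set_option linter.unusedSectionVars false

variable {R : Type*} [CommRing R] [IsDedekindDomain R] [Module.Free ℤ R]
  [Module.Finite ℤ R] [Nontrivial R] [CharZero R]

lemma spanp_ne_zero {p : ℕ} (hp : p.Prime) : (span {(p : R)} : Ideal R) ≠ 0 := by
  rw [Ideal.zero_eq_bot, ne_eq, span_singleton_eq_bot]
  exact_mod_cast hp.ne_zero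

/-- Every nonzero prime ideal lies over some rational prime. -/
lemma exists_rat_prime_over {P : Ideal R} (hP : Prime P) :
    ∃ p : ℕ, p.Prime ∧ P ∈ (normalizedFactors (span {(p : R)} : Ideal R)).toFinset := by
  have hP0 : P ≠ 0 := hP.ne_zero
  have habs0 : absNorm P ≠ 0 := by
    rw [ne_eq, absNorm_eq_zero_iff]; exact_mod_cast hP0
  -- the contraction of P to ℤ is a nonzero prime ideal
  have hPP : P.IsPrime := Ideal.isPrime_of_prime hP
  let pZ : Ideal ℤ := P.comap (algebraMap ℤ R)
  have hpZprime : pZ.IsPrime := Ideal.IsPrime.comap _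
  have hmem : (absNorm P : ℤ) ∈ pZ := by
    rw [Ideal.mem_comap]; exact_mod_cast absNorm_mem P
  obtain ⟨q, hq⟩ := Submodule.IsPrincipal.principal pZ
  rw [Ideal.submodule_span_eq] at hq
  have hq0 : q ≠ 0 := by
    rintro rfl
    rw [hq, span_singleton_eq_bot.mpr rfl] at hmem
    simp only [Ideal.mem_bot, Int.natCast_eq_zero] at hmem
    exact habs0 hmem
  have hqprime : Prime q := by
    rw [← Ideal.span_singleton_prime hq0, ← hq]; exact hpZprime
  refine ⟨q.natAbs, Int.prime_iff_natAbs_prime.mp hqprime, ?_⟩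
  have hmemZ : ((q.natAbs : ℕ) : ℤ) ∈ pZ := by
    rcases Int.natAbs_eq q with h | h
    · rw [← h, hq]; exact Ideal.mem_span_singleton_self q
    · rw [hq, Ideal.mem_span_singleton]
      exact ⟨-1, by linarith⟩
  have hpmem : ((q.natAbs : ℕ) : R) ∈ P := by
    have := Ideal.mem_comap.mp hmemZ
    have hc : ((q.natAbs : ℕ) : R) = algebraMap ℤ R ((q.natAbs : ℕ) : ℤ) := by
      rw [eq_intCast, Int.cast_natCast]
    rwa [hc]
  have hdvd : P ∣ span {((q.natAbs : ℕ) : R)} := by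
    rw [Ideal.dvd_iff_le, span_le, Set.singleton_subset_iff]
    exact hpmem
  obtain ⟨Q, hQ, hQ'⟩ := exists_mem_normalizedFactors_of_dvd
    (spanp_ne_zero (Int.prime_iff_natAbs_prime.mp hqprime)) hP.irreducible hdvd
  rwa [Multiset.mem_toFinset, associated_iff_eq.mp hQ']

/-- The norm of a prime over `p` is `p^i` with `1 ≤ i ≤ 2`. -/
lemma norm_prime_over {p : ℕ} (hp : p.Prime)
    (hnorm2 : absNorm (span {(p : R)} : Ideal R) = p ^ 2)
    {P : Ideal R} (hPm : P ∈ (normalizedFactors (span {(p : R)} : Ideal R)).toFinset) :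
    ∃ i, 1 ≤ i ∧ i ≤ 2 ∧ absNorm P = p ^ i := by
  have hPprime : Prime P := prime_of_normalized_factor P (Multiset.mem_toFinset.mp hPm)
  have hdvd : absNorm P ∣ p ^ 2 := by
    rw [← hnorm2]
    exact map_dvd absNorm (dvd_of_mem_normalizedFactors (Multiset.mem_toFinset.mp hPm))
  obtain ⟨i, hi2, hi⟩ := (Nat.dvd_prime_pow hp).mp hdvd
  refine ⟨i, ?_, hi2, hi⟩
  rcases Nat.eq_zero_or_pos i with rfl | h
  · exfalso
    rw [pow_zero, absNorm_eq_one_iff] at hi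
    exact hPprime.not_unit (isUnit_iff.mpr hi)
  · exact h

lemma factorization_norm_prime_over {p : ℕ} (hp : p.Prime)
    (hnorm2 : absNorm (span {(p : R)} : Ideal R) = p ^ 2)
    {P : Ideal R} (hPm : P ∈ (normalizedFactors (span {(p : R)} : Ideal R)).toFinset) :
    1 ≤ (absNorm P).factorization p ∧ (absNorm P).factorization p ≤ 2 := by
  obtain ⟨i, h1, h2, hi⟩ := norm_prime_over hp hnorm2 hPm
  rw [hi, hp.factorization_pow, Finsupp.single_eq_same]
  exact ⟨h1, h2⟩

/-- Key factorization identity: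
`v_p(N(I)) = ∑_{P over p} (count of P in I) * v_p(N(P))`. -/
lemma factorization_absNorm_eq
    (hnorm2 : ∀ p : ℕ, p.Prime → absNorm (span {(p : R)} : Ideal R) = p ^ 2)
    {I : Ideal R} (hI : I ≠ 0) {p : ℕ} (hp : p.Prime) :
    (absNorm I).factorization p
      = ∑ P ∈ (normalizedFactors (span {(p : R)} : Ideal R)).toFinset,
          Multiset.count P (normalizedFactors I) * (absNorm P).factorization p := by
  have hprime : ∀ P ∈ (normalizedFactors I).toFinset, Prime P := fun P hP =>
    prime_of_normalized_factor P (Multiset.mem_toFinset.mp hP)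
  have h1 : absNorm I = ∏ P ∈ (normalizedFactors I).toFinset,
      absNorm P ^ Multiset.count P (normalizedFactors I) := by
    conv_lhs => rw [← associated_iff_eq.mp (prod_normalizedFactors hI)]
    rw [map_multiset_prod, Finset.prod_multiset_map_count]
  have hne : ∀ P ∈ (normalizedFactors I).toFinset,
      absNorm P ^ Multiset.count P (normalizedFactors I) ≠ 0 := by
    intro P hP
    apply pow_ne_zero
    rw [ne_eq, absNorm_eq_zero_iff]
    exact_mod_cast (hprime P hP).ne_zero
  have h2 : (absNorm I).factorization p = ∑ P ∈ (normalizedFactors I).toFinset,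
      Multiset.count P (normalizedFactors I) * (absNorm P).factorization p := by
    rw [h1, Nat.factorization_prod hne, Finset.sum_apply']
    refine Finset.sum_congr rfl fun P hP => ?_
    rw [Nat.factorization_pow, Finsupp.smul_apply, smul_eq_mul]
  rw [h2]
  set B := (normalizedFactors (span {(p : R)} : Ideal R)).toFinset with hB
  set A := (normalizedFactors I).toFinset with hA
  have step1 : ∑ P ∈ A, Multiset.count P (normalizedFactors I) * (absNorm P).factorization p
      = ∑ P ∈ A ∩ B, Multiset.count P (normalizedFactors I) * (absNorm P).factorization p := by
    refine (Finset.sum_subset (Finset.inter_subset_left) ?_).symm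
    intro P hPA hPnotAB
    have hPnotB : P ∉ B := fun h => hPnotAB (Finset.mem_inter.mpr ⟨hPA, h⟩)
    have hPprime := hprime P hPA
    obtain ⟨q, hq, hqm⟩ := exists_rat_prime_over hPprime
    obtain ⟨i, hi1, hi2, hi⟩ := norm_prime_over hq (hnorm2 q hq) hqm
    have : ¬ p ∣ absNorm P := by
      intro hdvd
      rw [hi] at hdvd
      have : p = q := (Nat.prime_dvd_prime_iff_eq hp hq).mp (hp.dvd_of_dvd_pow hdvd)
      subst this
      exact hPnotB hqm
    rw [Nat.factorization_eq_zero_of_not_dvd this, mul_zero]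
  have step2 : ∑ P ∈ A ∩ B, Multiset.count P (normalizedFactors I) * (absNorm P).factorization p
      = ∑ P ∈ B, Multiset.count P (normalizedFactors I) * (absNorm P).factorization p := by
    refine Finset.sum_subset (Finset.inter_subset_right) ?_
    intro P hPB hPnotAB
    have hPnotA : P ∉ A := fun h => hPnotAB (Finset.mem_inter.mpr ⟨h, hPB⟩)
    rw [Multiset.count_eq_zero.mpr (fun h => hPnotA (Multiset.mem_toFinset.mpr h)), zero_mul]
  rw [step1, step2]
set_option maxHeartbeats 2000000 in
theorem card_absNorm_eq_le_card_divisors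
    (hnorm2 : ∀ p : ℕ, p.Prime → absNorm (span {(p : R)} : Ideal R) = p ^ 2)
    (n : ℕ) (hn : 0 < n) :
    ((Ideal.finite_setOf_absNorm_eq (S := R) n).toFinset).card ≤ n.divisors.card := by
  classical
  have keyp : ∀ p : ℕ, p.Prime →
      ∑ P ∈ (normalizedFactors (span {((p : ℕ) : R)} : Ideal R)).toFinset, Multiset.count P (normalizedFactors (span {((p : ℕ) : R)} : Ideal R))
        * (absNorm P).factorization p = 2 := by
    intro p hp
    have h := factorization_absNorm_eq hnorm2 (spanp_ne_zero hp) hp (I := span {(p : R)})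
    rw [hnorm2 p hp, hp.factorization_pow, Finsupp.single_eq_same] at h
    exact h.symm
  have hFpne : ∀ p, p.Prime → ((normalizedFactors (span {((p : ℕ) : R)} : Ideal R)).toFinset).Nonempty := by
    intro p hp
    rcases Finset.eq_empty_or_nonempty ((normalizedFactors (span {((p : ℕ) : R)} : Ideal R)).toFinset) with h | h
    · exfalso
      have h2 := keyp p hp
      rw [h, Finset.sum_empty] at h2
      exact two_ne_zero h2.symm
    · exact h
  set Pp : ℕ → Ideal R := fun p => if h : ((normalizedFactors (span {((p : ℕ) : R)} : Ideal R)).toFinset).Nonempty then h.choose else ⊥ with hPp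
  have hPpmem : ∀ p, p.Prime → Pp p ∈ (normalizedFactors (span {((p : ℕ) : R)} : Ideal R)).toFinset := by
    intro p hp
    rw [hPp]
    simp only [dif_pos (hFpne p hp)]
    exact (hFpne p hp).choose_spec
  set Φ : Ideal R → ℕ :=
    fun I => ∏ p ∈ n.primeFactors, p ^ Multiset.count (Pp p) (normalizedFactors I) with hΦdef
  have hnormI : ∀ I ∈ (Ideal.finite_setOf_absNorm_eq (S := R) n).toFinset, absNorm I = n := by
    intro I hI
    simpa using (Set.Finite.mem_toFinset _).mp hI
  have hne0 : ∀ (I : Ideal R), absNorm I = n → I ≠ 0 := by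
    intro I hIn h0
    rw [h0, Ideal.zero_eq_bot, absNorm_bot] at hIn
    exact hn.ne hIn
  have hcount_le : ∀ (I : Ideal R), I ≠ 0 → absNorm I = n → ∀ p ∈ n.primeFactors,
      Multiset.count (Pp p) (normalizedFactors I) ≤ n.factorization p := by
    intro I hI0 hIn p hpmem
    have hp := Nat.prime_of_mem_primeFactors hpmem
    have hfac := factorization_absNorm_eq hnorm2 hI0 hp
    rw [hIn] at hfac
    have hf := (factorization_norm_prime_over hp (hnorm2 p hp) (hPpmem p hp)).1
    calc Multiset.count (Pp p) (normalizedFactors I)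
        = Multiset.count (Pp p) (normalizedFactors I) * 1 := (mul_one _).symm
      _ ≤ Multiset.count (Pp p) (normalizedFactors I) * (absNorm (Pp p)).factorization p :=
          Nat.mul_le_mul_left _ hf
      _ ≤ ∑ P ∈ (normalizedFactors (span {((p : ℕ) : R)} : Ideal R)).toFinset, Multiset.count P (normalizedFactors I) * (absNorm P).factorization p :=
          Finset.single_le_sum
            (f := fun P => Multiset.count P (normalizedFactors I) * (absNorm P).factorization p)
            (fun _ _ => Nat.zero_le _) (hPpmem p hp)
      _ = n.factorization p := hfac.symm
  have hmaps : ∀ I ∈ (Ideal.finite_setOf_absNorm_eq (S := R) n).toFinset, Φ I ∈ n.divisors := by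
    intro I hI
    have hIn := hnormI I hI
    have hI0 := hne0 I hIn
    rw [Nat.mem_divisors]
    refine ⟨?_, hn.ne'⟩
    have hn' : ∏ p ∈ n.primeFactors, p ^ n.factorization p = n := by
      conv_rhs => rw [← Nat.factorization_prod_pow_eq_self hn.ne']
      rw [Finsupp.prod, Nat.support_factorization]
    calc Φ I ∣ ∏ p ∈ n.primeFactors, p ^ n.factorization p :=
          Finset.prod_dvd_prod_of_dvd _ _
            (fun p hp => pow_dvd_pow p (hcount_le I hI0 hIn p hp))
      _ = n := hn'
  have hlocal : ∀ p : ℕ, p.Prime → ∀ (I J : Ideal R), I ≠ 0 → J ≠ 0 →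
      absNorm I = n → absNorm J = n →
      Multiset.count (Pp p) (normalizedFactors I) = Multiset.count (Pp p) (normalizedFactors J) →
      ∀ P ∈ (normalizedFactors (span {((p : ℕ) : R)} : Ideal R)).toFinset,
        Multiset.count P (normalizedFactors I) = Multiset.count P (normalizedFactors J) := by
    intro p hp I J hI0 hJ0 hIn hJn hc
    have hfacI := factorization_absNorm_eq hnorm2 hI0 hp
    rw [hIn] at hfacI
    have hfacJ := factorization_absNorm_eq hnorm2 hJ0 hp
    rw [hJn] at hfacJ
    have hcard2 : ((normalizedFactors (span {((p : ℕ) : R)} : Ideal R)).toFinset).card ≤ 2 := by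
      have h2 := keyp p hp
      calc ((normalizedFactors (span {((p : ℕ) : R)} : Ideal R)).toFinset).card = ∑ _P ∈ (normalizedFactors (span {((p : ℕ) : R)} : Ideal R)).toFinset, 1 := Finset.card_eq_sum_ones _
        _ ≤ ∑ P ∈ (normalizedFactors (span {((p : ℕ) : R)} : Ideal R)).toFinset, Multiset.count P (normalizedFactors (span {((p : ℕ) : R)} : Ideal R))
              * (absNorm P).factorization p := by
            refine Finset.sum_le_sum fun P hP => ?_
            have he : 1 ≤ Multiset.count P (normalizedFactors (span {((p : ℕ) : R)} : Ideal R)) :=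
              Multiset.count_pos.mpr (Multiset.mem_toFinset.mp hP)
            have hf := (factorization_norm_prime_over hp (hnorm2 p hp) hP).1
            calc 1 = 1 * 1 := (one_mul 1).symm
              _ ≤ _ := Nat.mul_le_mul he hf
        _ = 2 := h2
    have hcard : ((normalizedFactors (span {((p : ℕ) : R)} : Ideal R)).toFinset).card = 1 ∨ ((normalizedFactors (span {((p : ℕ) : R)} : Ideal R)).toFinset).card = 2 := by
      have h1 : 1 ≤ ((normalizedFactors (span {((p : ℕ) : R)} : Ideal R)).toFinset).card := Finset.card_pos.mpr (hFpne p hp)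
      omega
    rcases hcard with hcard | hcard
    · obtain ⟨P₀, hP₀⟩ := Finset.card_eq_one.mp hcard
      have hfmem : Pp p ∈ (normalizedFactors (span {((p : ℕ) : R)} : Ideal R)).toFinset := hPpmem p hp
      intro P hP
      rw [hP₀, Finset.mem_singleton] at hP
      subst hP
      rw [hP₀, Finset.sum_singleton] at hfacI hfacJ
      have hf := (factorization_norm_prime_over hp (hnorm2 p hp)
        (by rw [hP₀]; exact Finset.mem_singleton_self _)).1
      have := hfacI.symm.trans hfacJ
      exact Nat.eq_of_mul_eq_mul_right (by omega) this
    · obtain ⟨P₁, P₂, hne, hpair⟩ := Finset.card_eq_two.mp hcard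
      have hmem1 : P₁ ∈ (normalizedFactors (span {((p : ℕ) : R)} : Ideal R)).toFinset := by rw [hpair]; simp
      have hmem2 : P₂ ∈ (normalizedFactors (span {((p : ℕ) : R)} : Ideal R)).toFinset := by rw [hpair]; simp
      have hf1 := factorization_norm_prime_over hp (hnorm2 p hp) hmem1
      have hf2 := factorization_norm_prime_over hp (hnorm2 p hp) hmem2
      have he1 : 1 ≤ Multiset.count P₁ (normalizedFactors (span {((p : ℕ) : R)} : Ideal R)) :=
        Multiset.count_pos.mpr (Multiset.mem_toFinset.mp hmem1)
      have he2 : 1 ≤ Multiset.count P₂ (normalizedFactors (span {((p : ℕ) : R)} : Ideal R)) :=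
        Multiset.count_pos.mpr (Multiset.mem_toFinset.mp hmem2)
      have h2 := keyp p hp
      rw [hpair, Finset.sum_pair hne] at h2
      have hff1 : (absNorm P₁).factorization p = 1 := by nlinarith [hf1.1, hf2.1]
      have hff2 : (absNorm P₂).factorization p = 1 := by nlinarith [hf1.1, hf2.1]
      rw [hpair, Finset.sum_pair hne, hff1, hff2, mul_one, mul_one] at hfacI hfacJ
      have hPpcase : Pp p = P₁ ∨ Pp p = P₂ := by
        have := hPpmem p hp
        rw [hpair] at this
        simpa using this
      intro P hP
      rw [hpair] at hP
      simp only [Finset.mem_insert, Finset.mem_singleton] at hP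
      rcases hPpcase with hPp1 | hPp1 <;> rw [hPp1] at hc <;> rcases hP with rfl | rfl <;> omega
  have hinj : Set.InjOn Φ ((Ideal.finite_setOf_absNorm_eq (S := R) n).toFinset : Set (Ideal R)) := by
    intro I hI J hJ hΦ
    have hIn := hnormI I (Finset.mem_coe.mp hI)
    have hJn := hnormI J (Finset.mem_coe.mp hJ)
    have hI0 := hne0 I hIn
    have hJ0 := hne0 J hJn
    have hfactΦ : ∀ (I' : Ideal R), ∀ p ∈ n.primeFactors,
        (Φ I').factorization p = Multiset.count (Pp p) (normalizedFactors I') := by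
      intro I' p hpmem
      have hp := Nat.prime_of_mem_primeFactors hpmem
      rw [hΦdef]
      rw [Nat.factorization_prod (fun q hq =>
        pow_ne_zero _ (Nat.prime_of_mem_primeFactors hq).ne_zero)]
      rw [Finset.sum_apply']
      rw [Finset.sum_eq_single_of_mem p hpmem]
      · rw [hp.factorization_pow, Finsupp.single_eq_same]
      · intro q hq hqp
        rw [(Nat.prime_of_mem_primeFactors hq).factorization_pow, Finsupp.single_eq_of_ne hqp.symm]
    have hcPp : ∀ p ∈ n.primeFactors,
        Multiset.count (Pp p) (normalizedFactors I) =
          Multiset.count (Pp p) (normalizedFactors J) := by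
      intro p hpmem
      rw [← hfactΦ I p hpmem, ← hfactΦ J p hpmem, hΦ]
    have hkey : ∀ P : Ideal R,
        Multiset.count P (normalizedFactors I) = Multiset.count P (normalizedFactors J) := by
      intro P
      by_cases hPmem : P ∈ (normalizedFactors I).toFinset ∨ P ∈ (normalizedFactors J).toFinset
      · have hPprime : Prime P := by
          rcases hPmem with h | h
          · exact prime_of_normalized_factor P (Multiset.mem_toFinset.mp h)
          · exact prime_of_normalized_factor P (Multiset.mem_toFinset.mp h)
        obtain ⟨p, hp, hPFp⟩ := exists_rat_prime_over hPprime
        have hNdvd : absNorm P ∣ n := by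
          rcases hPmem with h | h
          · rw [← hIn]
            exact map_dvd absNorm (dvd_of_mem_normalizedFactors (Multiset.mem_toFinset.mp h))
          · rw [← hJn]
            exact map_dvd absNorm (dvd_of_mem_normalizedFactors (Multiset.mem_toFinset.mp h))
        have hpn : p ∣ n := by
          obtain ⟨i, hi1, _, hi⟩ := norm_prime_over hp (hnorm2 p hp) hPFp
          exact dvd_trans (by rw [hi]; exact dvd_pow_self p (by omega)) hNdvd
        have hpmemF : p ∈ n.primeFactors := Nat.mem_primeFactors.mpr ⟨hp, hpn, hn.ne'⟩
        exact hlocal p hp I J hI0 hJ0 hIn hJn (hcPp p hpmemF) P hPFp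
      · push_neg at hPmem
        rw [Multiset.count_eq_zero.mpr (fun h => hPmem.1 (Multiset.mem_toFinset.mpr h)),
          Multiset.count_eq_zero.mpr (fun h => hPmem.2 (Multiset.mem_toFinset.mpr h))]
    have hnf : normalizedFactors I = normalizedFactors J := Multiset.ext.mpr hkey
    calc I = (normalizedFactors I).prod := (associated_iff_eq.mp (prod_normalizedFactors hI0)).symm
      _ = (normalizedFactors J).prod := by rw [hnf]
      _ = J := associated_iff_eq.mp (prod_normalizedFactors hJ0)
  exact Finset.card_le_card_of_injOn Φ hmaps hinj

lemma sum_card_divisors_le (N : ℕ) (hN : 1 ≤ N) :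
    ((∑ n ∈ Finset.Icc 1 N, n.divisors.card : ℕ) : ℝ) ≤ N * (1 + Real.log N) := by
  classical
  have step1 : (∑ n ∈ Finset.Icc 1 N, n.divisors.card) = ∑ d ∈ Finset.Icc 1 N, N / d := by
    have h1 : ∀ n ∈ Finset.Icc 1 N, n.divisors.card
        = ((Finset.Icc 1 N).filter (fun d => d ∣ n)).card := by
      intro n hn
      rw [Finset.mem_Icc] at hn
      congr 1
      ext d
      simp only [Nat.mem_divisors, Finset.mem_filter, Finset.mem_Icc]
      constructor
      · rintro ⟨hd, hn0⟩
        exact ⟨⟨Nat.pos_of_dvd_of_pos hd (by omega), (Nat.le_of_dvd (by omega) hd).trans hn.2⟩, hd⟩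
      · rintro ⟨_, hd⟩
        exact ⟨hd, by omega⟩
    rw [Finset.sum_congr rfl h1]
    simp_rw [Finset.card_filter]
    rw [Finset.sum_comm]
    refine Finset.sum_congr rfl fun d hd => ?_
    rw [← Finset.card_filter]
    rw [show Finset.Icc 1 N = Finset.Ioc 0 N from Finset.Icc_succ_left_eq_Ioc 0 N]
    exact Nat.Ioc_filter_dvd_card_eq_div N d
  rw [step1]
  have step2 : ((∑ d ∈ Finset.Icc 1 N, N / d : ℕ) : ℝ)
      ≤ ∑ d ∈ Finset.Icc 1 N, (N : ℝ) / d := by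
    push_cast
    exact Finset.sum_le_sum fun d _ => Nat.cast_div_le
  refine step2.trans ?_
  have step3 : ∑ d ∈ Finset.Icc 1 N, (N : ℝ) / d = N * ((harmonic N : ℚ) : ℝ) := by
    rw [show ((harmonic N : ℚ) : ℝ) = ∑ d ∈ Finset.Icc 1 N, ((d : ℝ))⁻¹ by
      rw [harmonic_eq_sum_Icc]; push_cast; rfl]
    rw [Finset.mul_sum]
    exact Finset.sum_congr rfl fun d _ => by rw [div_eq_mul_inv]
  rw [step3]
  have h4 := harmonic_le_one_add_log N
  have : (0 : ℝ) ≤ N := Nat.cast_nonneg N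
  nlinarith [h4]

end Counting

open Real in
open scoped nonZeroDivisors in
set_option maxHeartbeats 1000000 in
theorem imaginary_quadratic_classNumber_bound (K : Type*) [Field K] [NumberField K]
    (hdeg : Module.finrank ℚ K = 2) (himag : IsEmpty (K →+* ℝ)) :
    (NumberField.classNumber K : ℝ) <
      (1 / Real.pi) * Real.sqrt |(NumberField.discr K : ℝ)| *
        (2 + Real.log |(NumberField.discr K : ℝ)|) := by
  classical
  have hπ := Real.pi_pos
  set D : ℝ := |(NumberField.discr K : ℝ)| with hD
  have hD0 : 0 ≤ D := abs_nonneg _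
  have hD3 : (3 : ℝ) ≤ D := by
    have h2 : 2 < |discr K| := abs_discr_gt_two (by rw [hdeg]; norm_num)
    have : (3 : ℤ) ≤ |discr K| := by omega
    rw [hD, ← Int.cast_abs]
    exact_mod_cast this
  set M : ℝ := 2 / π * Real.sqrt D with hM
  have hsq : Real.sqrt D ^ 2 = D := Real.sq_sqrt hD0
  have hsqnn : 0 ≤ Real.sqrt D := Real.sqrt_nonneg D
  have hM1 : 1 ≤ M := by
    have h17 : (1.7 : ℝ) ≤ Real.sqrt D := by
      rw [Real.le_sqrt' (by norm_num)]
      nlinarith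
    rw [hM, div_mul_eq_mul_div, one_le_div hπ]
    nlinarith [Real.pi_lt_d2]
  have hM0 : 0 < M := lt_of_lt_of_le one_pos hM1
  -- the number of complex places is 1
  have hr0 : NumberField.InfinitePlace.nrRealPlaces K = 0 := by
    have : IsEmpty {w : InfinitePlace K // w.IsReal} :=
      ⟨fun w => himag.elim (InfinitePlace.embedding_of_isReal w.2)⟩
    exact Fintype.card_eq_zero
  have hr2 : NumberField.InfinitePlace.nrComplexPlaces K = 1 := by
    have h := InfinitePlace.card_add_two_mul_card_eq_rank K
    rw [hdeg, hr0] at h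
    omega
  -- Minkowski bound
  have hMk : ∀ C : ClassGroup (𝓞 K), ∃ I : (Ideal (𝓞 K))⁰,
      ClassGroup.mk0 I = C ∧ (absNorm (I : Ideal (𝓞 K)) : ℝ) ≤ M := by
    intro C
    obtain ⟨I, hI1, hI2⟩ := exists_ideal_in_class_of_norm_le C
    refine ⟨I, hI1, hI2.trans_eq ?_⟩
    rw [hr2, hdeg, hM, hD]
    norm_num [Nat.factorial]
    ring
  -- the degree-2 norm identity
  have hnorm2 : ∀ p : ℕ, p.Prime → absNorm (span {((p : ℕ) : 𝓞 K)}) = p ^ 2 := by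
    intro p hp
    rw [absNorm_span_singleton]
    rw [show ((p : ℕ) : 𝓞 K) = algebraMap ℤ (𝓞 K) ((p : ℕ) : ℤ) by simp]
    rw [Algebra.norm_algebraMap_of_basis (Module.Free.chooseBasis ℤ (𝓞 K)),
      ← Module.finrank_eq_card_chooseBasisIndex, RingOfIntegers.rank, hdeg]
    push_cast
    rw [Int.natAbs_pow]
    simp
  set N : ℕ := ⌊M⌋₊ with hNdef
  have hN1 : 1 ≤ N := Nat.le_floor (by exact_mod_cast hM1)
  -- injection of the class group into ideals of norm at most N
  set T : Finset (Ideal (𝓞 K)) := (Finset.Icc 1 N).biUnion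
    (fun n => (Ideal.finite_setOf_absNorm_eq (S := 𝓞 K) n).toFinset) with hT
  have hcard1 : NumberField.classNumber K ≤ T.card := by
    rw [NumberField.classNumber]
    rw [← Finset.card_univ]
    refine Finset.card_le_card_of_injOn (fun C => ((hMk C).choose : Ideal (𝓞 K))) ?_ ?_
    · intro C _
      rw [hT, Finset.mem_coe, Finset.mem_biUnion]
      refine ⟨absNorm ((hMk C).choose : Ideal (𝓞 K)), ?_, ?_⟩
      · rw [Finset.mem_Icc]
        exact ⟨absNorm_pos_of_nonZeroDivisors (hMk C).choose,
          Nat.le_floor (hMk C).choose_spec.2⟩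
      · rw [Set.Finite.mem_toFinset]
        exact rfl
    · intro C1 _ C2 _ h
      have h' : (hMk C1).choose = (hMk C2).choose := Subtype.coe_injective h
      rw [← (hMk C1).choose_spec.1, ← (hMk C2).choose_spec.1, h']
  have hcard2 : T.card ≤ ∑ n ∈ Finset.Icc 1 N, n.divisors.card := by
    refine Finset.card_biUnion_le.trans (Finset.sum_le_sum fun n hn => ?_)
    rw [Finset.mem_Icc] at hn
    exact card_absNorm_eq_le_card_divisors hnorm2 n hn.1
  -- put everything together
  have c1 : (NumberField.classNumber K : ℝ) ≤ (N : ℝ) * (1 + Real.log N) := by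
    refine le_trans ?_ (sum_card_divisors_le N hN1)
    exact_mod_cast hcard1.trans hcard2
  have c2 : (N : ℝ) * (1 + Real.log N) ≤ M * (1 + Real.log M) := by
    have hNM : (N : ℝ) ≤ M := Nat.floor_le hM0.le
    have hNpos : (0 : ℝ) < N := by exact_mod_cast hN1
    have hlog : Real.log N ≤ Real.log M := Real.log_le_log hNpos hNM
    have h1 : (0 : ℝ) ≤ 1 + Real.log N := by
      have : (0:ℝ) ≤ Real.log N := Real.log_nonneg (by exact_mod_cast hN1)
      linarith
    exact mul_le_mul hNM (by linarith) h1 hM0.le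
  have c3 : M * (1 + Real.log M) < M * (1 + Real.log D / 2) := by
    have hlogM : Real.log M = Real.log (2 / π) + Real.log D / 2 := by
      have hsDpos : 0 < Real.sqrt D := Real.sqrt_pos.mpr (by linarith)
      rw [hM, Real.log_mul (by positivity) hsDpos.ne', Real.log_sqrt hD0]
    have hneg : Real.log (2 / π) < 0 :=
      Real.log_neg (by positivity) ((div_lt_one hπ).mpr (by linarith [Real.pi_gt_three]))
    have : Real.log M < Real.log D / 2 := by rw [hlogM]; linarith
    exact mul_lt_mul_of_pos_left (by linarith) hM0
  have c4 : M * (1 + Real.log D / 2) = 1 / π * Real.sqrt D * (2 + Real.log D) := by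
    rw [hM]
    field_simp
  calc (NumberField.classNumber K : ℝ) ≤ (N : ℝ) * (1 + Real.log N) := c1
    _ ≤ M * (1 + Real.log M) := c2
    _ < M * (1 + Real.log D / 2) := c3
    _ = _ := c4
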